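/- For a connected graph G, Kemeny's constant satisfies tr(L_G^# D) - ‖w‖²/(γ_2 vol(G)) ≤ K(G) ≤ tr(L_G^# D) - ‖w‖²/(γ_n vol(G)), where w = k - (vol(G)/n)·1 and γ_2, γ_n are the smallest positive and largest eigenvalues of the combinatorial Laplacian. -/

import Mathlib

open Matrix Finset

set_option maxHeartbeats 1600000

/-- Wang et al.'s bounds: for a connected graph,
`tr(L^# D) - ‖w‖²/(γ₂ vol) ≤ K(G) ≤ tr(L^# D) - ‖w‖²/(γₙ vol)`,
where `w = k - (vol/n)·1`, `γ₂` and `γₙ` are the smallest positive and largest eigenvalues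
of the combinatorial Laplacian, and `K(G) = tr(L^# D) - (1/vol) kᵀ L^# k`. -/
theorem kemeny_degree_bounds {n : ℕ} (hn : 0 < n)
    (c : Matrix (Fin n) (Fin n) ℝ) (hsym : c.IsSymm) (hnonneg : ∀ i j, 0 ≤ c i j)
    (k : Fin n → ℝ) (hk : ∀ i, k i = ∑ j, c i j)
    (vol : ℝ) (hvol : vol = ∑ i, k i) (hvolpos : 0 < vol)
    (L Lp : Matrix (Fin n) (Fin n) ℝ)
    (hL : L = Matrix.diagonal k - c)
    (hg1 : L * Lp * L = L) (hg2 : Lp * L * Lp = Lp) (hg3 : L * Lp = Lp * L)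
    -- connectivity: the kernel of the Laplacian is spanned by the all-ones vector
    (hker : ∀ z : Fin n → ℝ, L.mulVec z = 0 ↔ ∃ t : ℝ, z = fun _ => t)
    (γ2 γn : ℝ) (hγ2pos : 0 < γ2) (hγnpos : 0 < γn)
    -- γ₂ is a lower bound of the quadratic form on the orthogonal complement of 1
    (hγ2 : ∀ z : Fin n → ℝ, (∑ i, z i) = 0 → γ2 * (z ⬝ᵥ z) ≤ z ⬝ᵥ L.mulVec z)
    -- γₙ is the largest eigenvalue of L
    (hγn : ∀ z : Fin n → ℝ, z ⬝ᵥ L.mulVec z ≤ γn * (z ⬝ᵥ z))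
    (w : Fin n → ℝ) (hw : w = fun i => k i - vol / n) :
    (Lp * Matrix.diagonal k).trace - (∑ i, (w i)^2) / (γ2 * vol)
        ≤ (Lp * Matrix.diagonal k).trace - (1/vol) * (k ⬝ᵥ Lp.mulVec k) ∧
      (Lp * Matrix.diagonal k).trace - (1/vol) * (k ⬝ᵥ Lp.mulVec k)
        ≤ (Lp * Matrix.diagonal k).trace - (∑ i, (w i)^2) / (γn * vol) := by
  have hnR : (0:ℝ) < (n:ℝ) := by exact_mod_cast hn
  have hLsymm : Lᵀ = L := by
    rw [hL, Matrix.transpose_sub, Matrix.diagonal_transpose, hsym.eq]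
  set one : Fin n → ℝ := fun _ => (1:ℝ) with hone
  -- L * 1 = 0
  have hL1 : L.mulVec one = 0 := by
    funext i
    rw [hL, Matrix.sub_mulVec]
    have hc : (c *ᵥ one) i = ∑ j, c i j := by
      simp [Matrix.mulVec, dotProduct, hone]
    have hd : (Matrix.diagonal k *ᵥ one) i = k i := by
      rw [Matrix.mulVec_diagonal]; simp [hone]
    simp [hc, hd, hk i]
  have h1L : one ᵥ* L = 0 := by
    rw [← hLsymm, Matrix.vecMul_transpose, hL1]
  -- sum of w is 0
  have hsumw : (∑ i, w i) = 0 := by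
    simp [hw, Finset.sum_sub_distrib, ← hvol]
    field_simp
    ring
  -- Lp = Lp * Lp * L  and  Lp = L * Lp * Lp
  have hLp_r : Lp = Lp * Lp * L := by
    calc Lp = Lp * L * Lp := hg2.symm
    _ = Lp * Lp * L := by rw [Matrix.mul_assoc, hg3, ← Matrix.mul_assoc]
  have hLp_l : Lp = L * Lp * Lp := by
    calc Lp = Lp * L * Lp := hg2.symm
    _ = L * Lp * Lp := by rw [← hg3]
  -- Lp * 1 = 0  and  1ᵀ Lp = 0
  have hLp1 : Lp.mulVec one = 0 := by
    conv_lhs => rw [hLp_r]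
    rw [← Matrix.mulVec_mulVec, ← Matrix.mulVec_mulVec, hL1]
    simp
  have h1Lp : one ᵥ* Lp = 0 := by
    conv_lhs => rw [hLp_l]
    rw [← Matrix.vecMul_vecMul, ← Matrix.vecMul_vecMul, h1L]
    simp
  set u : Fin n → ℝ := Lp.mulVec w with hu
  have hdot_one : ∀ v : Fin n → ℝ, one ⬝ᵥ v = ∑ i, v i := by
    intro v; simp [dotProduct, hone]
  -- sum of u is zero
  have hsumu : (∑ i, u i) = 0 := by
    rw [← hdot_one, hu, Matrix.dotProduct_mulVec, h1Lp, zero_dotProduct]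
  -- L u = w
  have hLu : L.mulVec u = w := by
    have h5 : L.mulVec ((L * Lp).mulVec w - w) = 0 := by
      rw [Matrix.mulVec_sub, Matrix.mulVec_mulVec]
      have hLLLp : L * (L * Lp) = L := by rw [hg3, ← Matrix.mul_assoc, hg1]
      rw [hLLLp, sub_self]
    obtain ⟨t, ht⟩ := (hker _).mp h5
    have hsum0 : (∑ i, ((L * Lp).mulVec w - w) i) = (n:ℝ) * t := by
      rw [ht]; simp [mul_comm]
    have hsum0' : (∑ i, ((L * Lp).mulVec w - w) i) = 0 := by
      have hs : (∑ i, ((L * Lp).mulVec w) i) = 0 := by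
        rw [← hdot_one, Matrix.dotProduct_mulVec, ← Matrix.vecMul_vecMul, h1L]
        simp
      simp [Finset.sum_sub_distrib, hs, hsumw]
    have ht0 : t = 0 := by
      have h6 := hsum0.symm.trans hsum0'
      rcases mul_eq_zero.mp h6 with h | h
      · exact absurd h (by positivity)
      · exact h
    have h7 : (L * Lp).mulVec w = w := by
      have h8 : (L * Lp).mulVec w - w = 0 := by rw [ht, ht0]; funext i; simp
      exact sub_eq_zero.mp h8
    rw [hu, Matrix.mulVec_mulVec, h7]
  -- k = w + (vol/n) • 1
  have hkw : k = w + (vol / n) • one := by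
    funext i; simp [hw, hone]
  -- k ⬝ Lp k = w ⬝ u
  have hkLpk : k ⬝ᵥ Lp.mulVec k = w ⬝ᵥ u := by
    rw [hkw]
    rw [Matrix.mulVec_add, Matrix.mulVec_smul, hLp1, smul_zero, add_zero, ← hu]
    rw [add_dotProduct, smul_dotProduct, hdot_one, hsumu, smul_zero,
      add_zero]
  set A : ℝ := w ⬝ᵥ L.mulVec w with hA
  set B : ℝ := w ⬝ᵥ w with hB
  set C : ℝ := w ⬝ᵥ u with hC
  have hBsum : (∑ i, (w i)^2) = B := by
    simp [hB, dotProduct, sq]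
  have huLu : u ⬝ᵥ L.mulVec u = C := by
    rw [hLu, dotProduct_comm]
  have huLw : u ⬝ᵥ L.mulVec w = B := by
    rw [Matrix.dotProduct_mulVec, ← hLsymm, Matrix.vecMul_transpose, hLu, hB]
  have hwLu : w ⬝ᵥ L.mulVec u = B := by rw [hLu]
  -- nonnegativity
  have hself : ∀ v : Fin n → ℝ, (0:ℝ) ≤ v ⬝ᵥ v := fun v =>
    Finset.sum_nonneg (fun i _ => mul_self_nonneg _)
  have huu_nonneg : (0:ℝ) ≤ u ⬝ᵥ u := hself u
  have hB_nonneg : (0:ℝ) ≤ B := hself w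
  have hγ2u : γ2 * (u ⬝ᵥ u) ≤ C := by
    have := hγ2 u hsumu
    rwa [huLu] at this
  have hC_nonneg : (0:ℝ) ≤ C :=
    le_trans (by positivity) hγ2u
  have hCS : C^2 ≤ B * (u ⬝ᵥ u) := by
    have := Finset.sum_mul_sq_le_sq_mul_sq Finset.univ w u
    simpa [hC, hB, dotProduct, sq] using this
  -- lower-bound side : γ2 * C ≤ B
  have hlow : γ2 * C ≤ B := by
    rcases eq_or_lt_of_le hC_nonneg with h0 | hCpos
    · rw [← h0]; simpa using hB_nonneg
    · have h1 : γ2 * C^2 ≤ B * C := by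
        calc γ2 * C^2 ≤ γ2 * (B * (u ⬝ᵥ u)) := by
              apply mul_le_mul_of_nonneg_left hCS (le_of_lt hγ2pos)
        _ = B * (γ2 * (u ⬝ᵥ u)) := by ring
        _ ≤ B * C := mul_le_mul_of_nonneg_left hγ2u hB_nonneg
      have := le_of_mul_le_mul_right (by linarith [h1] : (γ2 * C) * C ≤ B * C) hCpos
      exact this
  -- expansion : ∀ t, 0 ≤ A - 2 t B + t² C
  have hexp : ∀ t : ℝ, 0 ≤ A - 2*t*B + t^2 * C := by
    intro t
    have hsz : (∑ i, (w - t • u) i) = 0 := by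
      simp [Finset.sum_sub_distrib, ← Finset.mul_sum, hsumw, hsumu]
    have hq := hγ2 (w - t • u) hsz
    have hzz : (0:ℝ) ≤ γ2 * ((w - t • u) ⬝ᵥ (w - t • u)) := by
      have := hself (w - t • u)
      positivity
    have hrhs : (w - t • u) ⬝ᵥ L.mulVec (w - t • u) = A - 2*t*B + t^2 * C := by
      simp only [Matrix.mulVec_sub, Matrix.mulVec_smul, sub_dotProduct,
        smul_dotProduct, dotProduct_sub, dotProduct_smul,
        hwLu, huLw, huLu, smul_eq_mul, ← hA]
      ring
    rw [hrhs] at hq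
    linarith
  have hAbound : A ≤ γn * B := by
    have := hγn w; rwa [← hA, ← hB] at this
  -- upper-bound side : B ≤ γn * C
  have hup : B ≤ γn * C := by
    rcases eq_or_lt_of_le hC_nonneg with h0 | hCpos
    · -- C = 0 forces u = 0 hence w = 0
      have huu0 : u ⬝ᵥ u = 0 := by
        have h1 : γ2 * (u ⬝ᵥ u) ≤ 0 := by rw [← h0] at hγ2u; linarith
        nlinarith
      have hu0 : u = 0 := dotProduct_self_eq_zero.mp huu0
      have hw0 : w = 0 := by rw [← hLu, hu0, Matrix.mulVec_zero]
      have : B = 0 := by rw [hB, hw0]; simp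
      rw [this]; positivity
    · have h1 := hexp (B / C)
      have h2 : B^2 ≤ A * C := by
        have hC0 : C ≠ 0 := ne_of_gt hCpos
        have : 0 ≤ A - B^2 / C := by
          have e : A - 2*(B/C)*B + (B/C)^2 * C = A - B^2 / C := by
            field_simp; ring
          rwa [e] at h1
        have := (div_le_iff₀ hCpos).mp (by linarith : B^2 / C ≤ A)
        linarith
      have h3 : B^2 ≤ γn * B * C := by
        calc B^2 ≤ A * C := h2
        _ ≤ (γn * B) * C := mul_le_mul_of_nonneg_right hAbound hCpos.le
      rcases eq_or_lt_of_le hB_nonneg with hB0 | hBpos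
      · rw [← hB0]; exact mul_nonneg hγnpos.le hCpos.le
      · have : B * B ≤ (γn * C) * B := by nlinarith
        exact le_of_mul_le_mul_right this hBpos
  -- conclude
  have need1 : (1/vol) * C ≤ B / (γ2 * vol) := by
    rw [le_div_iff₀ (by positivity : (0:ℝ) < γ2 * vol)]
    have he : (1/vol) * C * (γ2 * vol) = γ2 * C := by field_simp
    rw [he]; exact hlow
  have need2 : B / (γn * vol) ≤ (1/vol) * C := by
    rw [div_le_iff₀ (by positivity : (0:ℝ) < γn * vol)]
    have he : (1/vol) * C * (γn * vol) = γn * C := by field_simp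
    rw [he]; exact hup
  constructor
  · apply sub_le_sub_left
    rw [hkLpk, hBsum]
    exact need1
  · apply sub_le_sub_left
    rw [hkLpk, hBsum]
    exact need2
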